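/- Let t, d, e be nonzero elements of a field (or positive reals). Define infinite matrices D*, A*, E* by: D*_{ij} = 1/d if j = i+1 and 0 otherwise; A*_{ij} = 1 if j = 1 and 0 otherwise; E*_{i1} = d^{i-1}/(e t^{i-1}) and for 2 ≤ j ≤ i, E*_{ij} = d^{i-j}/t^{i-j+1}, with E*_{ij} = 0 for j > i. Then t·D*E* = D* + E*, d·D*A* = A*, and e·A*E* = A*. -/

import Mathlib

noncomputable def matMulF {F : Type*} [Field F] (M N : ℕ → ℕ → F) : ℕ → ℕ → F :=
  fun i j => ∑ᶠ k, M i k * N k j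

def DstarM {F : Type*} [Field F] (d : F) : ℕ → ℕ → F :=
  fun i j => if j = i + 1 then 1 / d else 0

def AstarM {F : Type*} [Field F] : ℕ → ℕ → F :=
  fun _ j => if j = 0 then 1 else 0

def EstarM {F : Type*} [Field F] (t d e : F) : ℕ → ℕ → F :=
  fun i j =>
    if j = 0 then d ^ i / (e * t ^ i)
    else if j ≤ i then d ^ (i - j) / t ^ (i - j + 1)
    else 0

lemma matMulF_D {F : Type*} [Field F] (d : F) (N : ℕ → ℕ → F) (i j : ℕ) :
    matMulF (DstarM d) N i j = 1 / d * N (i + 1) j := by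
  unfold matMulF DstarM
  rw [finsum_eq_single _ (i + 1)]
  · simp
  · intro x hx; simp [hx]

lemma matMulF_A {F : Type*} [Field F] (N : ℕ → ℕ → F) (i j : ℕ) :
    matMulF (AstarM (F := F)) N i j = N 0 j := by
  unfold matMulF AstarM
  rw [finsum_eq_single _ 0]
  · simp
  · intro x hx; simp [hx]

theorem inhomog_ansatz_matrices {F : Type*} [Field F] (t d e : F)
    (ht : t ≠ 0) (hd : d ≠ 0) (he : e ≠ 0) :
    (∀ i j, t * matMulF (DstarM d) (EstarM t d e) i j = DstarM (F := F) d i j + EstarM t d e i j) ∧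
    (∀ i j, d * matMulF (DstarM d) (AstarM (F := F)) i j = AstarM (F := F) i j) ∧
    (∀ i j, e * matMulF (AstarM (F := F)) (EstarM t d e) i j = AstarM (F := F) i j) := by
  refine ⟨fun i j => ?_, fun i j => ?_, fun i j => ?_⟩
  · rw [matMulF_D]
    unfold DstarM EstarM
    rcases Nat.eq_zero_or_pos j with hj | hj
    · subst hj
      simp only [if_pos rfl, ↓reduceIte]
      rw [if_neg (by omega : ¬ (0 : ℕ) = i + 1)]
      field_simp
      ring
    · rw [if_neg (by omega : ¬ j = 0), if_neg (by omega : ¬ j = 0)]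
      rcases lt_trichotomy j (i + 1) with h | h | h
      · have hji : j ≤ i := by omega
        rw [if_pos (by omega : j ≤ i + 1), if_pos hji, if_neg (by omega : ¬ j = i + 1)]
        have h1 : i + 1 - j = (i - j) + 1 := by omega
        rw [h1]
        rw [pow_succ, pow_succ]
        field_simp
        ring
      · subst h
        rw [if_pos le_rfl, if_neg (by omega : ¬ i + 1 ≤ i), if_pos rfl]
        simp only [Nat.sub_self, pow_zero, zero_add, pow_one]
        field_simp
        ring
      · rw [if_neg (by omega : ¬ j ≤ i + 1), if_neg (by omega : ¬ j ≤ i),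
          if_neg (by omega : ¬ j = i + 1)]
        simp
  · rw [matMulF_D]
    unfold AstarM
    rcases Nat.eq_zero_or_pos j with hj | hj
    · subst hj; simp [hd]
    · simp [hj.ne']
  · rw [matMulF_A]
    unfold AstarM EstarM
    rcases Nat.eq_zero_or_pos j with hj | hj
    · subst hj; simp [he]
    · rw [if_neg (by omega : ¬ j = 0), if_neg (by omega : ¬ j = 0),
        if_neg (by omega : ¬ j ≤ 0)]; ring
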